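/- Let p₁ and p₂ be distinct odd primes and n₁, n₂ positive integers, and set n = p₁^{n₁}·p₂^{n₂}. Then the girth of the unit graph G(Z_n) equals 3. -/

import Mathlib

/-- The unit graph of `ZMod m`: distinct vertices `x, y` are adjacent iff `x + y` is a unit. -/
def unitGraph (m : ℕ) : SimpleGraph (ZMod m) where
  Adj x y := x ≠ y ∧ IsUnit (x + y)
  symm := by
    constructor
    intro x y h
    exact ⟨h.1.symm, by rw [add_comm]; exact h.2⟩
  loopless := by
    constructor
    intro x h
    exact h.1 rfl

lemma girth_eq_three_of_triangle {α : Type*} {G : SimpleGraph α} {a b c : α}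
    (hab : G.Adj a b) (hbc : G.Adj b c) (hca : G.Adj c a) : G.girth = 3 := by
  have hne1 := hab.ne
  have hne2 := hbc.ne
  have hne3 := hca.ne
  have hw : (SimpleGraph.Walk.cons hab (SimpleGraph.Walk.cons hbc
      (SimpleGraph.Walk.cons hca SimpleGraph.Walk.nil))).IsCycle := by
    apply SimpleGraph.Walk.isCycle_def _ |>.mpr
    refine ⟨⟨?_⟩, ?_, ?_⟩
    · simp [SimpleGraph.Walk.edges, Sym2.eq, Sym2.rel_iff']
      aesop
    · simp
    · simp
      aesop
  have hna : ¬ G.IsAcyclic := fun h => h _ hw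
  have h3 : 3 ≤ G.girth := SimpleGraph.three_le_girth hna
  have hle : G.egirth ≤ 3 := by
    have := SimpleGraph.le_egirth.mp (le_refl G.egirth) a _ hw
    simpa using this
  have : G.girth ≤ 3 := by
    have := ENat.toNat_le_toNat hle (by simp)
    simpa [SimpleGraph.girth] using this
  omega

theorem unitGraph_twoOddPrimes_girth (p₁ p₂ n₁ n₂ : ℕ)
    (hp₁ : p₁.Prime) (hp₂ : p₂.Prime) (hodd₁ : Odd p₁) (hodd₂ : Odd p₂)
    (hne : p₁ ≠ p₂) (hn₁ : 0 < n₁) (hn₂ : 0 < n₂) :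
    (unitGraph (p₁ ^ n₁ * p₂ ^ n₂)).girth = 3 := by
  have hcop : Nat.Coprime (p₁ ^ n₁) (p₂ ^ n₂) :=
    Nat.Coprime.pow n₁ n₂ ((Nat.coprime_primes hp₁ hp₂).mpr hne)
  haveI : Fact (1 < p₁ ^ n₁) := ⟨Nat.one_lt_pow hn₁.ne' hp₁.one_lt⟩
  haveI : Fact (1 < p₂ ^ n₂) := ⟨Nat.one_lt_pow hn₂.ne' hp₂.one_lt⟩
  haveI : NeZero (p₁ ^ n₁) := ⟨(pow_pos hp₁.pos n₁).ne'⟩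
  haveI : NeZero (p₂ ^ n₂) := ⟨(pow_pos hp₂.pos n₂).ne'⟩
  let e := ZMod.chineseRemainder hcop
  set a := e.symm (0, 1) with ha
  set b := e.symm (1, 0) with hb
  set c := e.symm (1, 1) with hc
  have h2u₁ : IsUnit (2 : ZMod (p₁ ^ n₁)) := by
    have h : ((2 : ℕ) : ZMod (p₁ ^ n₁)) = 2 := by push_cast; ring
    rw [← h, ZMod.isUnit_iff_coprime]
    exact (Nat.Coprime.pow_right _ hodd₁.coprime_two_left)
  have h2u₂ : IsUnit (2 : ZMod (p₂ ^ n₂)) := by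
    have h : ((2 : ℕ) : ZMod (p₂ ^ n₂)) = 2 := by push_cast; ring
    rw [← h, ZMod.isUnit_iff_coprime]
    exact (Nat.Coprime.pow_right _ hodd₂.coprime_two_left)
  have hinj := e.symm.injective
  have hab : (unitGraph (p₁ ^ n₁ * p₂ ^ n₂)).Adj a b := by
    constructor
    · intro h
      have h1 : (0 : ZMod (p₁ ^ n₁)) = 1 := congrArg Prod.fst (hinj h)
      exact zero_ne_one h1
    · have h : a + b = e.symm ((0, 1) + (1, 0)) := by rw [ha, hb, map_add]
      rw [h, Prod.mk_add_mk, zero_add, add_zero]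
      exact IsUnit.map e.symm (isUnit_one (M := ZMod (p₁ ^ n₁) × ZMod (p₂ ^ n₂)))
  have hbc : (unitGraph (p₁ ^ n₁ * p₂ ^ n₂)).Adj b c := by
    constructor
    · intro h
      have h1 : (0 : ZMod (p₂ ^ n₂)) = 1 := congrArg Prod.snd (hinj h)
      exact zero_ne_one h1
    · have h : b + c = e.symm ((1, 0) + (1, 1)) := by rw [hb, hc, map_add]
      rw [h, Prod.mk_add_mk, zero_add]
      have hu : IsUnit ((1 + 1 : ZMod (p₁ ^ n₁)), (1 : ZMod (p₂ ^ n₂))) := by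
        rw [one_add_one_eq_two]
        exact h2u₁.map (MonoidHom.inl _ _)
      exact hu.map e.symm
  have hca : (unitGraph (p₁ ^ n₁ * p₂ ^ n₂)).Adj c a := by
    constructor
    · intro h
      have h1 : (1 : ZMod (p₁ ^ n₁)) = 0 := congrArg Prod.fst (hinj h)
      exact one_ne_zero h1
    · have h : c + a = e.symm ((1, 1) + (0, 1)) := by rw [ha, hc, map_add]
      rw [h, Prod.mk_add_mk, add_zero]
      have hu : IsUnit ((1 : ZMod (p₁ ^ n₁)), (1 + 1 : ZMod (p₂ ^ n₂))) := by
        rw [one_add_one_eq_two]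
        exact h2u₂.map (MonoidHom.inr _ _)
      exact hu.map e.symm
  exact girth_eq_three_of_triangle hab hbc hca
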